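/- For every positive integer r and ε > 0 there exists n_0 such that: if G is a graph on n ≥ n_0 vertices with minimum degree at least (1/2 + ε)n and (r+1) divides n, then G contains a K_{1,r}-factor, i.e., n/(r+1) pairwise vertex-disjoint copies of the star K_{1,r}. -/

import Mathlib

set_option maxHeartbeats 1000000
open Finset


variable {V : Type} [Fintype V] [DecidableEq V]

def lvl (m : ℕ) (D : Finset V) (k : ℕ) : Finset (Finset V) :=
  (Finset.powersetCard m Finset.univ).filter (fun C => (C ∩ D).card = k)

lemma lvl_step (m : ℕ) (D : Finset V) (k : ℕ) :
    (lvl m D k).card * ((m - k) * (D.card - k)) ≤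
    (lvl m D (k+1)).card * ((k+1) * ((Fintype.card V - D.card) - (m - (k+1)))) := by
  classical
  set n := Fintype.card V
  set d := D.card
  have hT1 : ((lvl m D k).sigma (fun C => (C \ D) ×ˢ (D \ C))).card
      = (lvl m D k).card * ((m - k) * (d - k)) := by
    rw [Finset.card_sigma]
    have hcg : ∀ C ∈ lvl m D k, ((C \ D) ×ˢ (D \ C)).card = (m-k)*(d-k) := by
      intro C hC
      simp only [lvl, Finset.mem_filter, Finset.mem_powersetCard_univ] at hC
      rw [Finset.card_product]
      have h1 : (C \ D).card = m - k := by
        have := Finset.card_sdiff_add_card_inter C D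
        omega
      have h2 : (D \ C).card = d - k := by
        have := Finset.card_sdiff_add_card_inter D C
        rw [Finset.inter_comm] at this
        omega
      rw [h1, h2]
    rw [Finset.sum_congr rfl hcg, Finset.sum_const, smul_eq_mul]
  have hT2 : ((lvl m D (k+1)).sigma (fun C => (C ∩ D) ×ˢ (Dᶜ \ C))).card
      = (lvl m D (k+1)).card * ((k+1) * ((n - d) - (m - (k+1)))) := by
    rw [Finset.card_sigma]
    have hcg : ∀ C ∈ lvl m D (k+1),
        ((C ∩ D) ×ˢ (Dᶜ \ C)).card = (k+1)*((n-d)-(m-(k+1))) := by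
      intro C hC
      simp only [lvl, Finset.mem_filter, Finset.mem_powersetCard_univ] at hC
      rw [Finset.card_product, hC.2]
      congr 1
      have h1 : (C \ D).card = m - (k+1) := by
        have := Finset.card_sdiff_add_card_inter C D
        omega
      have h2 : Dᶜ \ C = Dᶜ \ (C \ D) := by
        ext x; simp only [Finset.mem_sdiff, Finset.mem_compl]; tauto
      have h3 : C \ D ⊆ Dᶜ := by
        intro x hx; simp only [Finset.mem_sdiff] at hx
        simp only [Finset.mem_compl]; exact hx.2
      rw [h2, Finset.card_sdiff_of_subset h3, h1, Finset.card_compl]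
    rw [Finset.sum_congr rfl hcg, Finset.sum_const, smul_eq_mul]
  rw [← hT1, ← hT2]
  apply Finset.card_le_card_of_injOn
    (fun p => ⟨insert p.2.2 (p.1.erase p.2.1), (p.2.2, p.2.1)⟩)
  · rintro ⟨C, x, y⟩ hp
    simp only [Finset.mem_sigma, Finset.mem_product, Finset.mem_sdiff, Finset.mem_inter,
      Finset.mem_compl, lvl, Finset.mem_filter, Finset.mem_powersetCard_univ, Finset.mem_coe] at hp ⊢
    obtain ⟨⟨hCm, hCk⟩, ⟨hxC, hxD⟩, hyD, hyC⟩ := hp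
    have hxy : x ≠ y := fun h => hxD (h ▸ hyD)
    have hyCx : y ∉ C.erase x := fun h => hyC (Finset.mem_of_mem_erase h)
    refine ⟨⟨?_, ?_⟩, ⟨⟨Finset.mem_insert_self _ _, hyD⟩, hxD, ?_⟩⟩
    · rw [Finset.card_insert_of_notMem hyCx, Finset.card_erase_of_mem hxC]
      have hc1 : 1 ≤ C.card := Finset.card_pos.2 ⟨x, hxC⟩
      omega
    · have : insert y (C.erase x) ∩ D = insert y (C ∩ D) := by
        ext z
        simp only [Finset.mem_inter, Finset.mem_insert, Finset.mem_erase]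
        constructor
        · rintro ⟨(rfl | ⟨hzx, hzC⟩), hzD⟩
          · exact Or.inl rfl
          · exact Or.inr ⟨hzC, hzD⟩
        · rintro (rfl | ⟨hzC, hzD⟩)
          · exact ⟨Or.inl rfl, hyD⟩
          · exact ⟨Or.inr ⟨fun h => hxD (h ▸ hzD), hzC⟩, hzD⟩
      rw [this, Finset.card_insert_of_notMem (fun h => hyC (Finset.mem_inter.1 h).1), hCk]
    · simp only [Finset.mem_insert, Finset.mem_erase, not_or]
      exact ⟨fun h => hxD (h ▸ hyD), fun h => h.1 rfl⟩
  · rintro ⟨C1, x1, y1⟩ h1 ⟨C2, x2, y2⟩ h2 heq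
    simp only [Finset.coe_sigma, Set.mem_sigma_iff, Finset.mem_coe, Finset.mem_product,
      Finset.mem_sdiff, Finset.mem_inter, Finset.mem_compl] at h1 h2
    simp only [Sigma.mk.inj_iff, Prod.mk.injEq] at heq
    obtain ⟨hC, hpair⟩ := heq
    have hpair' : (y1, x1) = (y2, x2) := eq_of_heq hpair
    have hy : y1 = y2 := (Prod.ext_iff.1 hpair').1
    have hx : x1 = x2 := (Prod.ext_iff.1 hpair').2
    subst hy hx
    have hx1C : x1 ∈ C1 := h1.2.1.1
    have hx2C : x1 ∈ C2 := h2.2.1.1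
    have hy1C : y1 ∉ C1 := h1.2.2.2
    have hy2C : y1 ∉ C2 := h2.2.2.2
    have : C1 = C2 := by
      have e1 : insert x1 ((insert y1 (C1.erase x1)).erase y1) = C1 := by
        rw [Finset.erase_insert (fun h => hy1C (Finset.mem_of_mem_erase h)),
          Finset.insert_erase hx1C]
      have e2 : insert x1 ((insert y1 (C2.erase x1)).erase y1) = C2 := by
        rw [Finset.erase_insert (fun h => hy2C (Finset.mem_of_mem_erase h)),
          Finset.insert_erase hx2C]
      rw [← e1, ← e2, hC]
    simp [this]



lemma tail_bound (m a j : ℕ) (D : Finset V) (γ : ℝ) (hγ0 : 0 < γ) (hγ1 : γ ≤ 1/2)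
    (hn : 0 < Fintype.card V) (hm : m ≤ Fintype.card V)
    (key : ((a + j : ℕ) : ℝ) * (Fintype.card V) + γ * m * (Fintype.card V)
        + 2 * (Fintype.card V) ≤ (D.card : ℝ) * m) :
    (((Finset.powersetCard m (Finset.univ : Finset V)).filter
        (fun C => (C ∩ D).card ≤ a)).card : ℝ)
      ≤ (Fintype.card V : ℝ) * (1 - γ)^j
          * ((Finset.powersetCard m (Finset.univ : Finset V)).card : ℝ) := by
  classical
  set n := Fintype.card V with hn'
  set d := D.card with hd'
  have hdn : d ≤ n := by rw [hd', hn', ← Finset.card_univ]; exact Finset.card_le_univ D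
  have hnR : (1 : ℝ) ≤ (n : ℝ) := by exact_mod_cast hn
  have basic : ∀ k : ℕ, k ≤ a + j → k + 2 ≤ m ∧ k + 2 ≤ d := by
    intro k hk
    have hkR : ((k : ℕ) : ℝ) ≤ ((a + j : ℕ) : ℝ) := by exact_mod_cast hk
    have h1 : ((k : ℝ) + 2) * n ≤ (d : ℝ) * m := by
      nlinarith [key, mul_nonneg (mul_nonneg hγ0.le (Nat.cast_nonneg m)) (Nat.cast_nonneg n),
        mul_le_mul_of_nonneg_right hkR (Nat.cast_nonneg n)]
    have hdm1 : (d : ℝ) * m ≤ (n : ℝ) * m := by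
      have : (d:ℝ) ≤ n := by exact_mod_cast hdn
      nlinarith [this]
    have hdm2 : (d : ℝ) * m ≤ (d : ℝ) * n := by
      have h : (m:ℝ) ≤ n := by exact_mod_cast hm
      have hd0 : (0:ℝ) ≤ d := by positivity
      nlinarith [h, hd0]
    constructor
    · have : ((k : ℝ) + 2) * n ≤ (n : ℝ) * m := h1.trans hdm1
      have h2 : (k : ℝ) + 2 ≤ m := by
        have hnpos : (0:ℝ) < n := by exact_mod_cast hn
        nlinarith [this]
      exact_mod_cast h2
    · have : ((k : ℝ) + 2) * n ≤ (d : ℝ) * n := h1.trans hdm2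
      have h2 : (k : ℝ) + 2 ≤ d := by
        have hnpos : (0:ℝ) < n := by exact_mod_cast hn
        nlinarith [this]
      exact_mod_cast h2
  have hmn' : m ≤ n := hm
  have hstep : ∀ k : ℕ, k ≤ a + j →
      ((lvl m D k).card : ℝ) ≤ (1 - γ) * ((lvl m D (k+1)).card : ℝ) := by
    intro k hk
    obtain ⟨hkm, hkd⟩ := basic k hk
    rcases Nat.eq_zero_or_pos (lvl m D (k+1)).card with h0 | hpos
    · have hN := lvl_step m D k
      rw [h0, Nat.zero_mul] at hN
      have hmk : 0 < (m - k) * (d - k) := by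
        have : 0 < m - k := by omega
        have : 0 < d - k := by omega
        positivity
      have : (lvl m D k).card = 0 := by
        rcases Nat.eq_zero_or_pos (lvl m D k).card with h | h
        · exact h
        · exact absurd hN (Nat.not_le_of_lt (Nat.mul_pos h hmk))
      rw [this, h0]
      norm_num
    · obtain ⟨C', hC'⟩ := Finset.card_pos.mp hpos
      simp only [lvl, Finset.mem_filter, Finset.mem_powersetCard_univ] at hC'
      have hsub : m - (k+1) ≤ n - d := by
        have h1 : (C' \ D).card = m - (k+1) := by
          have := Finset.card_sdiff_add_card_inter C' D
          omega
        have h2 : C' \ D ⊆ Dᶜ := by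
          intro x hx
          simp only [Finset.mem_sdiff] at hx
          simp only [Finset.mem_compl]
          exact hx.2
        have h3 := Finset.card_le_card h2
        rw [h1, Finset.card_compl] at h3
        exact h3
      have hstepN := lvl_step m D k
      rw [← hn', ← hd'] at hstepN
      have e1 : ((m - k : ℕ) : ℝ) = (m : ℝ) - k := by
        rw [Nat.cast_sub (by omega)]
      have e2 : ((d - k : ℕ) : ℝ) = (d : ℝ) - k := by
        rw [Nat.cast_sub (by omega)]
      have e3 : (((n - d) - (m - (k+1)) : ℕ) : ℝ)
          = (n : ℝ) - d - ((m : ℝ) - (k + 1)) := by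
        rw [Nat.cast_sub hsub, Nat.cast_sub hdn, Nat.cast_sub (show k + 1 ≤ m by omega)]
        push_cast
        ring
      have hcast : ((lvl m D k).card : ℝ) * (((m:ℝ) - k) * ((d:ℝ) - k))
          ≤ ((lvl m D (k+1)).card : ℝ)
            * (((k:ℝ) + 1) * ((n:ℝ) - d - ((m:ℝ) - (k+1)))) := by
        have h := (Nat.cast_le (α := ℝ)).mpr hstepN
        push_cast at h
        rw [e1, e2, e3] at h
        exact h
      have keyk : (k : ℝ) * n + γ * m * n + 2 * n ≤ (d : ℝ) * m := by
        have hkR : ((k : ℕ) : ℝ) ≤ ((a + j : ℕ) : ℝ) := by exact_mod_cast hk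
        nlinarith [key]
      have hkmR : (k : ℝ) + 2 ≤ m := by exact_mod_cast hkm
      have hkdR : (k : ℝ) + 2 ≤ d := by exact_mod_cast hkd
      have hdnR : (d : ℝ) ≤ n := by exact_mod_cast hdn
      have hmnR : (m : ℝ) ≤ n := by exact_mod_cast hmn'
      have hq0 : ((m:ℝ) - k) * ((d:ℝ) - k) ≤ (m:ℝ) * n := by
        have h0k : (0:ℝ) ≤ (k:ℝ) := Nat.cast_nonneg k
        nlinarith [hkmR, hkdR, hdnR, hmnR, h0k]
      have hq1 : γ * (((m:ℝ) - k) * ((d:ℝ) - k)) ≤ γ * ((m:ℝ) * n) :=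
        mul_le_mul_of_nonneg_left hq0 hγ0.le
      have hratio : ((k:ℝ) + 1) * ((n:ℝ) - d - ((m:ℝ) - (k+1)))
          ≤ (1 - γ) * (((m:ℝ) - k) * ((d:ℝ) - k)) := by
        nlinarith [hq1, keyk]
      have hP : (0:ℝ) < ((m:ℝ) - k) * ((d:ℝ) - k) := by nlinarith
      have hB : (0:ℝ) ≤ ((lvl m D (k+1)).card : ℝ) := by positivity
      have h2 := hcast.trans (mul_le_mul_of_nonneg_left hratio hB)
      have h3 : ((lvl m D k).card : ℝ) * (((m:ℝ) - k) * ((d:ℝ) - k))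
          ≤ ((1 - γ) * ((lvl m D (k+1)).card : ℝ)) * (((m:ℝ) - k) * ((d:ℝ) - k)) := by
        nlinarith [h2]
      exact le_of_mul_le_mul_right h3 hP
  set P : ℝ := ((Finset.powersetCard m (Finset.univ : Finset V)).card : ℝ) with hP'
  have hPnn : 0 ≤ P := by positivity
  have main : ∀ i : ℕ, ∀ k : ℕ, k + i = a + j + 1 →
      ((lvl m D k).card : ℝ) ≤ (1 - γ)^i * P := by
    intro i
    induction i with
    | zero =>
      intro k hk
      simp only [pow_zero, one_mul]
      have hle : (lvl m D k).card ≤ (Finset.powersetCard m (Finset.univ : Finset V)).card := by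
        unfold lvl
        exact Finset.card_filter_le _ _
      rw [hP']
      exact_mod_cast hle
    | succ i ih =>
      intro k hk
      have hk' : k ≤ a + j := by omega
      calc ((lvl m D k).card : ℝ) ≤ (1 - γ) * ((lvl m D (k+1)).card : ℝ) := hstep k hk'
        _ ≤ (1 - γ) * ((1 - γ)^i * P) := by
            apply mul_le_mul_of_nonneg_left (ih (k+1) (by omega)) (by linarith)
        _ = (1 - γ)^(i+1) * P := by ring
  have hsubb : (Finset.powersetCard m (Finset.univ : Finset V)).filter
      (fun C => (C ∩ D).card ≤ a) ⊆ (Finset.range (a+1)).biUnion (lvl m D) := by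
    intro C hC
    simp only [Finset.mem_filter] at hC
    simp only [Finset.mem_biUnion, Finset.mem_range, lvl, Finset.mem_filter]
    exact ⟨(C ∩ D).card, by omega, hC.1, rfl⟩
  have hcard1 : ((Finset.powersetCard m (Finset.univ : Finset V)).filter
      (fun C => (C ∩ D).card ≤ a)).card ≤ ∑ k ∈ Finset.range (a+1), (lvl m D k).card :=
    (Finset.card_le_card hsubb).trans (Finset.card_biUnion_le)
  have hcard2 : (∑ k ∈ Finset.range (a+1), ((lvl m D k).card : ℝ))
      ≤ (a + 1 : ℝ) * ((1 - γ)^j * P) := by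
    have hterm : ∀ k ∈ Finset.range (a+1), ((lvl m D k).card : ℝ) ≤ (1 - γ)^j * P := by
      intro k hkk
      simp only [Finset.mem_range] at hkk
      have hi : k + (a + j + 1 - k) = a + j + 1 := by omega
      have h1 := main (a + j + 1 - k) k hi
      have h2 : (1 - γ)^(a + j + 1 - k) ≤ (1 - γ)^j := by
        apply pow_le_pow_of_le_one (by linarith) (by linarith)
        omega
      calc ((lvl m D k).card : ℝ) ≤ (1 - γ)^(a + j + 1 - k) * P := h1
        _ ≤ (1 - γ)^j * P := mul_le_mul_of_nonneg_right h2 hPnn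
    calc (∑ k ∈ Finset.range (a+1), ((lvl m D k).card : ℝ))
        ≤ ∑ _k ∈ Finset.range (a+1), (1 - γ)^j * P := Finset.sum_le_sum hterm
      _ = (a + 1 : ℝ) * ((1 - γ)^j * P) := by
          rw [Finset.sum_const, Finset.card_range, nsmul_eq_mul]
          push_cast
          ring
  have ha1n : (a + 1 : ℝ) ≤ (n : ℝ) := by
    have := (basic (a + j) le_rfl).1
    have : a + 1 ≤ n := by omega
    exact_mod_cast this
  calc (((Finset.powersetCard m (Finset.univ : Finset V)).filter
        (fun C => (C ∩ D).card ≤ a)).card : ℝ)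
      ≤ (∑ k ∈ Finset.range (a+1), ((lvl m D k).card : ℝ)) := by
        exact_mod_cast hcard1
    _ ≤ (a + 1 : ℝ) * ((1 - γ)^j * P) := hcard2
    _ ≤ (n : ℝ) * ((1 - γ)^j * P) := by
        exact mul_le_mul_of_nonneg_right ha1n
          (mul_nonneg (pow_nonneg (by linarith) j) hPnn)
    _ = (n : ℝ) * (1 - γ)^j * P := by ring


lemma numeric_final (r K m n j : ℕ) (γ : ℝ) (hγdef : γ = 1/(4*(K:ℝ)))
    (hKR : (8:ℝ) ≤ K) (hrR : (1:ℝ) ≤ r)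
    (hmR : (32768:ℝ)*((r:ℝ)+1)*(K:ℝ)^4 ≤ m)
    (hnR : (n:ℝ) = ((r:ℝ)+1)*m) (hn1 : (1:ℝ) ≤ (n:ℝ))
    (hj_ub : (j:ℝ) ≤ γ*m) (hj_lb : γ*(m:ℝ) - 1 ≤ j)
    (hgm16 : (16:ℝ) ≤ γ*m) :
    2*(n:ℝ)^2*(1-γ)^j < 1 := by
  have hK0 : (0:ℝ) < K := by linarith
  have hγ0 : 0 < γ := by rw [hγdef]; positivity
  have hγhalf : γ ≤ 1/2 := by
    rw [hγdef, div_le_iff₀ (by positivity)]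
    nlinarith
  set t := j / 4 with htdef
  have h4t : 4*t ≤ j ∧ j ≤ 4*t + 3 := by omega
  clear_value t
  have htR : (j:ℝ) ≤ 4*(t:ℝ) + 3 := by exact_mod_cast h4t.2
  have htγ : γ^2*(m:ℝ)/8 ≤ (t:ℝ)*γ := by
    have h1 : (γ*(m:ℝ) - 1)*γ ≤ (j:ℝ)*γ := mul_le_mul_of_nonneg_right hj_lb hγ0.le
    nlinarith [hgm16, hγ0, hγhalf, h1, htR]
  have hγ4m : 128*((r:ℝ)+1) ≤ γ^4*(m:ℝ) := by
    have he : γ^4*((32768:ℝ)*((r:ℝ)+1)*(K:ℝ)^4) = 128*((r:ℝ)+1) := by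
      rw [hγdef]; field_simp; ring
    nlinarith [mul_le_mul_of_nonneg_left hmR (by positivity : (0:ℝ) ≤ γ^4)]
  have hQ2 : 2*(n:ℝ) ≤ ((t:ℝ)*γ)^2 := by
    have h1 : (γ^2*(m:ℝ)/8)^2 ≤ ((t:ℝ)*γ)^2 :=
      pow_le_pow_left₀ (by positivity) htγ 2
    have h2 : 2*((r:ℝ)+1)*m ≤ (γ^2*(m:ℝ)/8)^2 := by
      nlinarith [mul_le_mul_of_nonneg_right hγ4m (by positivity : (0:ℝ) ≤ (m:ℝ))]
    rw [hnR]; nlinarith [h1, h2]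
  have hQ : 2*(n:ℝ)^2 < (1+γ)^j := by
    have p1 : (1+γ)^(4*t) ≤ (1+γ)^j := pow_le_pow_right₀ (by linarith) h4t.1
    have p2 : ((1+γ)^t)^4 = (1+γ)^(4*t) := by rw [← pow_mul, mul_comm]
    have p3 : (1 + (t:ℝ)*γ) ≤ (1+γ)^t := one_add_mul_le_pow (by linarith) t
    have p4 : ((t:ℝ)*γ)^4 ≤ (1+(t:ℝ)*γ)^4 :=
      pow_le_pow_left₀ (by positivity) (by linarith) 4
    have p5 : (2*(n:ℝ))^2 ≤ (((t:ℝ)*γ)^2)^2 :=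
      pow_le_pow_left₀ (by positivity) hQ2 2
    have p6 : (1+(t:ℝ)*γ)^4 ≤ ((1+γ)^t)^4 :=
      pow_le_pow_left₀ (by positivity) p3 4
    nlinarith [p1, p2, p4, p5, p6, hn1]
  have hp1 : (0:ℝ) < (1+γ)^j := by positivity
  have hle1 : (1-γ)^j*(1+γ)^j ≤ 1 := by
    have hmm : (1-γ)^j*(1+γ)^j = (1-γ^2)^j := by
      rw [← mul_pow]; ring_nf
    rw [hmm]
    exact pow_le_one₀ (by nlinarith) (by nlinarith)
  have h2 : (1-γ)^j ≤ 1/(1+γ)^j := by rw [le_div_iff₀ hp1]; linarith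
  calc 2*(n:ℝ)^2*(1-γ)^j ≤ 2*(n:ℝ)^2*(1/(1+γ)^j) := by
        apply mul_le_mul_of_nonneg_left h2 (by positivity)
    _ = 2*(n:ℝ)^2/(1+γ)^j := by ring
    _ < 1 := (div_lt_one hp1).mpr hQ

lemma exists_good (V : Type) [Fintype V] [DecidableEq V] (G : SimpleGraph V)
    [DecidableRel G.Adj] (r m K : ℕ) (hr : 1 ≤ r) (hK : 8 ≤ K)
    (hcard : Fintype.card V = (r+1) * m)
    (hM : 32768*(r+1)*K^4 ≤ m)
    (hdeg : ∀ v : V, ((1:ℝ)/2 + 1/K) * (Fintype.card V) ≤ (G.degree v : ℝ)) :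
    ∃ C : Finset V, C.card = m ∧ ∀ v : V,
      (⌈((1:ℝ)/2 + 1/(4*K)) * m⌉₊ ≤ (C ∩ G.neighborFinset v).card ∧
       (C ∩ G.neighborFinset v).card + r * ⌈((1:ℝ)/2 + 1/(4*K)) * m⌉₊ ≤ G.degree v) := by
  classical
  have hm1 : 1 ≤ m := by
    calc 1 ≤ K^4 := Nat.one_le_pow _ _ (by omega)
    _ ≤ 32768*(r+1)*K^4 := Nat.le_mul_of_pos_left _ (by positivity)
    _ ≤ m := hM
  have hn0 : 0 < Fintype.card V := by rw [hcard]; positivity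
  have hmn : m ≤ Fintype.card V := by rw [hcard]; nlinarith
  set n := Fintype.card V with hn'
  set γ : ℝ := 1/(4*K) with hγdef
  set A : ℕ := ⌈((1:ℝ)/2 + γ) * m⌉₊ with hAdef
  set j : ℕ := ⌊γ * (m:ℝ)⌋₊ with hjdef
  -- real facts
  have hKR : (8:ℝ) ≤ K := by exact_mod_cast hK
  have hK0 : (0:ℝ) < K := by linarith
  have hγ0 : 0 < γ := by rw [hγdef]; positivity
  have hγhalf : γ ≤ 1/2 := by
    rw [hγdef, div_le_iff₀ (by positivity)]
    nlinarith
  have hrR : (1:ℝ) ≤ r := by exact_mod_cast hr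
  have hmR : (32768:ℝ)*((r:ℝ)+1)*(K:ℝ)^4 ≤ m := by exact_mod_cast hM
  have hm1R : (1:ℝ) ≤ m := by exact_mod_cast hm1
  have hnR : (n:ℝ) = ((r:ℝ)+1)*m := by rw [hcard]; push_cast; ring
  have hK2 : (64:ℝ) ≤ (K:ℝ)^2 := by nlinarith [hKR]
  have hK3 : (512:ℝ) ≤ (K:ℝ)^3 := by nlinarith [mul_le_mul hKR hK2 (by norm_num) (by positivity : (0:ℝ) ≤ (K:ℝ))]
  have hK4 : (4096:ℝ) ≤ (K:ℝ)^4 := by nlinarith [mul_le_mul hKR hK3 (by norm_num) (by positivity : (0:ℝ) ≤ (K:ℝ))]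
  have hgm : 8192*((r:ℝ)+1)*(K:ℝ)^3 ≤ γ*m := by
    have he : γ*((32768:ℝ)*((r:ℝ)+1)*(K:ℝ)^4) = 8192*((r:ℝ)+1)*(K:ℝ)^3 := by
      rw [hγdef]; field_simp; ring
    nlinarith [mul_le_mul_of_nonneg_left hmR hγ0.le]
  have hgm16 : (16:ℝ) ≤ γ*m := by nlinarith
  have hgmr : ((r:ℝ)+1) ≤ γ*m := by nlinarith
  have hKγ : (1:ℝ)/K = 4*γ := by rw [hγdef]; field_simp
  have hA_lb : ((1:ℝ)/2 + γ)*m ≤ A := Nat.le_ceil _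
  have hA_ub : (A:ℝ) ≤ ((1:ℝ)/2 + γ)*m + 1 :=
    (Nat.ceil_lt_add_one (by positivity)).le
  have hA1 : 1 ≤ A := by
    have : (0:ℝ) < ((1:ℝ)/2 + γ)*m := by positivity
    exact Nat.ceil_pos.mpr this
  have hj_ub : (j:ℝ) ≤ γ*m := Nat.floor_le (by positivity)
  have hj_lb : γ*(m:ℝ) - 1 ≤ j := by
    have := Nat.lt_floor_add_one (γ*(m:ℝ))
    linarith
  clear_value γ A j
  set P := Finset.powersetCard m (Finset.univ : Finset V) with hPdef
  have hPpos : 0 < P.card := by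
    obtain ⟨C₀, _, hC₀⟩ := Finset.exists_subset_card_eq
      (show m ≤ (Finset.univ : Finset V).card by rwa [Finset.card_univ])
    exact Finset.card_pos.mpr ⟨C₀, Finset.mem_powersetCard_univ.mpr hC₀⟩
  -- bad sets
  have hbadL : ∀ v : V, ((P.filter
      (fun C => (C ∩ G.neighborFinset v).card ≤ A - 1)).card : ℝ)
      ≤ (n:ℝ)*(1-γ)^j*(P.card:ℝ) := by
    intro v
    apply tail_bound (m := m) (a := A - 1) (j := j) (D := G.neighborFinset v) (γ := γ)
      hγ0 hγhalf hn0 hmn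
    rw [SimpleGraph.card_neighborFinset_eq_degree]
    have hdv := hdeg v
    have hcst : ((A - 1 + j : ℕ) : ℝ) = (A:ℝ) - 1 + j := by
      push_cast [hA1]; ring
    rw [hcst]
    have key1 : (A:ℝ) - 1 + j + γ*m + 2 ≤ (1/2 + 1/(K:ℝ))*m := by
      rw [hKγ]
      nlinarith [hA_ub, hj_ub, hgm16]
    have h2 := mul_le_mul_of_nonneg_right key1 (Nat.cast_nonneg n)
    have h3 := mul_le_mul_of_nonneg_right hdv (by positivity : (0:ℝ) ≤ (m:ℝ))
    nlinarith [h2, h3]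
  have hbadU : ∀ v : V, (((if G.degree v < m + r*A then P.filter
      (fun C => (C ∩ (G.neighborFinset v)ᶜ).card ≤ m + r*A - 1 - G.degree v)
      else (∅ : Finset (Finset V)))).card : ℝ)
      ≤ (n:ℝ)*(1-γ)^j*(P.card:ℝ) := by
    intro v
    split_ifs with hd
    · apply tail_bound (m := m) (a := m + r*A - 1 - G.degree v) (j := j)
        (D := (G.neighborFinset v)ᶜ) (γ := γ) hγ0 hγhalf hn0 hmn
      have hdlt : G.degree v < n := SimpleGraph.degree_lt_card_verts (G := G) v
      have hDc : (((G.neighborFinset v)ᶜ : Finset V).card : ℝ) = (n:ℝ) - G.degree v := by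
        rw [Finset.card_compl, SimpleGraph.card_neighborFinset_eq_degree]
        push_cast [Nat.cast_sub hdlt.le]
        exact Nat.cast_sub hdlt.le
      rw [hDc]
      have hcst : ((m + r*A - 1 - G.degree v + j : ℕ) : ℝ)
          = (m:ℝ) + r*A - 1 - G.degree v + j := by
        have h1 : G.degree v + 1 ≤ m + r*A := hd
        push_cast [Nat.cast_sub (show G.degree v ≤ m + r*A - 1 by omega),
          Nat.cast_sub (show 1 ≤ m + r*A by omega)]
        ring
      rw [hcst]
      have hdv := hdeg v
      have key2 : (r:ℝ)*A + j + γ*m + 1 ≤ (1/2 + 1/(K:ℝ))*(r:ℝ)*m := by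
        rw [hKγ]
        have hprod : ((r:ℝ)+1)*1 ≤ (γ*m)*(3*(r:ℝ)-2) := by
          apply mul_le_mul hgmr (by linarith) (by norm_num) (by positivity)
        nlinarith [mul_le_mul_of_nonneg_left hA_ub (by positivity : (0:ℝ) ≤ (r:ℝ)),
          hj_ub, hprod]
      have h2 := mul_le_mul_of_nonneg_right key2 (Nat.cast_nonneg n)
      have h3 := mul_le_mul_of_nonneg_right hdv
        (by positivity : (0:ℝ) ≤ (r:ℝ)*m)
      nlinarith [h2, h3, hnR]
    · simp only [Finset.card_empty, Nat.cast_zero]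
      have : (0:ℝ) ≤ (1-γ)^j := pow_nonneg (by linarith) j
      positivity
  set good : Finset V → Prop := fun C => ∀ v : V,
      (A ≤ (C ∩ G.neighborFinset v).card ∧
       (C ∩ G.neighborFinset v).card + r * A ≤ G.degree v) with hgooddef
  set bad : V → Finset (Finset V) := fun v =>
      (P.filter (fun C => (C ∩ G.neighborFinset v).card ≤ A - 1)) ∪
      (if G.degree v < m + r*A then P.filter
        (fun C => (C ∩ (G.neighborFinset v)ᶜ).card ≤ m + r*A - 1 - G.degree v)
       else (∅ : Finset (Finset V))) with hbaddef
  have hbadcard : ∀ v : V, ((bad v).card : ℝ) ≤ 2*((n:ℝ)*(1-γ)^j*(P.card:ℝ)) := by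
    intro v
    have h := Finset.card_union_le
      (P.filter (fun C => (C ∩ G.neighborFinset v).card ≤ A - 1))
      (if G.degree v < m + r*A then P.filter
        (fun C => (C ∩ (G.neighborFinset v)ᶜ).card ≤ m + r*A - 1 - G.degree v)
       else (∅ : Finset (Finset V)))
    have hc : ((bad v).card : ℝ) ≤
        ((P.filter (fun C => (C ∩ G.neighborFinset v).card ≤ A - 1)).card : ℝ) +
        (((if G.degree v < m + r*A then P.filter
          (fun C => (C ∩ (G.neighborFinset v)ᶜ).card ≤ m + r*A - 1 - G.degree v)
         else (∅ : Finset (Finset V)))).card : ℝ) := by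
      rw [hbaddef]
      exact_mod_cast h
    linarith [hbadL v, hbadU v]
  have hsub : P.filter (fun C => ¬ good C) ⊆ Finset.univ.biUnion bad := by
    intro C hC
    simp only [Finset.mem_filter] at hC
    obtain ⟨hCP, hng⟩ := hC
    simp only [hgooddef] at hng
    push_neg at hng
    obtain ⟨v, hv⟩ := hng
    refine Finset.mem_biUnion.mpr ⟨v, Finset.mem_univ v, ?_⟩
    rw [hbaddef]
    by_cases hx : (C ∩ G.neighborFinset v).card ≤ A - 1
    · exact Finset.mem_union_left _ (Finset.mem_filter.mpr ⟨hCP, hx⟩)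
    · have hge : A ≤ (C ∩ G.neighborFinset v).card := by omega
      have hy := hv hge
      have hCm : C.card = m := Finset.mem_powersetCard_univ.mp hCP
      have hXle : (C ∩ G.neighborFinset v).card ≤ m := by
        calc (C ∩ G.neighborFinset v).card ≤ C.card :=
              Finset.card_le_card Finset.inter_subset_left
          _ = m := hCm
      have hdlt : G.degree v < m + r*A := by omega
      have hsplit : (C ∩ (G.neighborFinset v)ᶜ).card
          + (C ∩ G.neighborFinset v).card = m := by
        have h1 : C ∩ (G.neighborFinset v)ᶜ = C \ G.neighborFinset v := by
          ext x
          simp only [Finset.mem_inter, Finset.mem_compl, Finset.mem_sdiff]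
        rw [h1, Finset.card_sdiff_add_card_inter, hCm]
      apply Finset.mem_union_right
      rw [if_pos hdlt]
      exact Finset.mem_filter.mpr ⟨hCP, by omega⟩
  have hcount : ((P.filter (fun C => ¬ good C)).card : ℝ)
      ≤ (n:ℝ) * (2*((n:ℝ)*(1-γ)^j*(P.card:ℝ))) := by
    have h1 : (P.filter (fun C => ¬ good C)).card ≤ ∑ v : V, (bad v).card :=
      (Finset.card_le_card hsub).trans Finset.card_biUnion_le
    have h2 : ((P.filter (fun C => ¬ good C)).card : ℝ)
        ≤ ∑ v : V, ((bad v).card : ℝ) := by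
      push_cast
      exact_mod_cast h1
    calc ((P.filter (fun C => ¬ good C)).card : ℝ)
        ≤ ∑ v : V, ((bad v).card : ℝ) := h2
      _ ≤ ∑ _v : V, 2*((n:ℝ)*(1-γ)^j*(P.card:ℝ)) :=
          Finset.sum_le_sum (fun v _ => hbadcard v)
      _ = (n:ℝ) * (2*((n:ℝ)*(1-γ)^j*(P.card:ℝ))) := by
          rw [Finset.sum_const, Finset.card_univ, nsmul_eq_mul, ← hn']
  have hfinal : 2*(n:ℝ)^2*(1-γ)^j < 1 :=
    numeric_final r K m n j γ hγdef hKR hrR hmR hnR (by exact_mod_cast hn0) hj_ub hj_lb hgm16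
  have hPposR : (0:ℝ) < (P.card:ℝ) := by exact_mod_cast hPpos
  have hlt : ((P.filter (fun C => ¬ good C)).card : ℝ) < (P.card:ℝ) := by
    have he : (n:ℝ) * (2*((n:ℝ)*(1-γ)^j*(P.card:ℝ))) = (2*(n:ℝ)^2*(1-γ)^j) * (P.card:ℝ) := by
      ring
    rw [he] at hcount
    calc ((P.filter (fun C => ¬ good C)).card : ℝ)
        ≤ (2*(n:ℝ)^2*(1-γ)^j) * (P.card:ℝ) := hcount
      _ < 1 * (P.card:ℝ) := mul_lt_mul_of_pos_right hfinal hPposR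
      _ = (P.card:ℝ) := one_mul _
  obtain ⟨C, hCP, hCgood⟩ : ∃ C ∈ P, good C := by
    by_contra hcon
    push_neg at hcon
    have hfe : P.filter (fun C => ¬ good C) = P :=
      Finset.filter_eq_self.mpr (fun C hC => hcon C hC)
    rw [hfe] at hlt
    exact lt_irrefl _ hlt
  exact ⟨C, Finset.mem_powersetCard_univ.mp hCP, hCgood⟩


lemma hall_part (V : Type) [Fintype V] [DecidableEq V] (G : SimpleGraph V)
    [DecidableRel G.Adj] (r m A : ℕ) (hr : 1 ≤ r)
    (hcard : Fintype.card V = (r+1)*m)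
    (C : Finset V) (hCm : C.card = m) (hA1 : 1 ≤ A) (hA2 : m ≤ 2*A)
    (hgood : ∀ v : V, A ≤ (C ∩ G.neighborFinset v).card ∧
      (C ∩ G.neighborFinset v).card + r*A ≤ G.degree v) :
    ∃ c : V → V,
      (∀ v : V, c (c v) = c v) ∧
      (∀ v : V, c v ≠ v → G.Adj (c v) v) ∧
      (∀ v : V, c v = v →
        (Finset.univ.filter fun u : V => c u = v ∧ u ≠ v).card = r) := by
  classical
  set L := Cᶜ with hLdef
  have hLcard : L.card = r*m := by
    rw [hLdef, Finset.card_compl, hCm, hcard, add_mul, one_mul, Nat.add_sub_cancel]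
  have hmemL : ∀ {v : V}, v ∉ C → v ∈ L := fun h => by
    rw [hLdef]; exact Finset.mem_compl.mpr h
  set T : {x // x ∈ L} → Finset (V × Fin r) :=
    fun ℓ => (C ∩ G.neighborFinset ℓ.1) ×ˢ Finset.univ with hTdef
  have hall : ∀ s : Finset {x // x ∈ L}, s.card ≤ (s.biUnion T).card := by
    intro s
    rcases Finset.eq_empty_or_nonempty s with rfl | ⟨ℓ₀, hℓ₀⟩
    · simp
    have hBU : s.biUnion T
        = (s.biUnion (fun ℓ => C ∩ G.neighborFinset ℓ.1)) ×ˢ (Finset.univ : Finset (Fin r)) := by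
      ext p
      simp only [Finset.mem_biUnion, Finset.mem_product, Finset.mem_univ, and_true, hTdef]
    rw [hBU, Finset.card_product, Finset.card_univ, Fintype.card_fin]
    set B := s.biUnion (fun ℓ => C ∩ G.neighborFinset ℓ.1) with hBdef
    by_cases hs : s.card ≤ r*A
    · have hsubB : C ∩ G.neighborFinset ℓ₀.1 ⊆ B := by
        rw [hBdef]
        exact Finset.subset_biUnion_of_mem (fun ℓ : {x // x ∈ L} => C ∩ G.neighborFinset ℓ.1) hℓ₀
      have h1 : A ≤ B.card := le_trans (hgood ℓ₀.1).1 (Finset.card_le_card hsubB)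
      calc s.card ≤ r*A := hs
        _ ≤ r*B.card := Nat.mul_le_mul_left r h1
        _ = B.card*r := Nat.mul_comm _ _
    · push_neg at hs
      have hBC : B = C := by
        apply Finset.Subset.antisymm
        · exact Finset.biUnion_subset.mpr (fun ℓ _ => Finset.inter_subset_left)
        · intro c hc
          set W := s.image (fun ℓ : {x // x ∈ L} => ℓ.1) with hWdef
          have hWL : W ⊆ L := by
            intro x hx
            rw [hWdef] at hx
            obtain ⟨ℓ, _, rfl⟩ := Finset.mem_image.mp hx
            exact ℓ.2
          have hWcard : W.card = s.card :=
            Finset.card_image_of_injective s Subtype.val_injective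
          set X := G.neighborFinset c \ C with hXdef
          have hXL : X ⊆ L := by
            intro x hx
            rw [hXdef] at hx
            exact hmemL (Finset.mem_sdiff.mp hx).2
          have hXcard : r*A ≤ X.card := by
            have h1 : X.card + (G.neighborFinset c ∩ C).card = G.degree c := by
              rw [hXdef]
              have h := Finset.card_sdiff_add_card_inter (G.neighborFinset c) C
              rw [SimpleGraph.card_neighborFinset_eq_degree] at h
              exact h
            have h2 := (hgood c).2
            have h3 : (G.neighborFinset c ∩ C).card = (C ∩ G.neighborFinset c).card := by
              rw [Finset.inter_comm]
            omega
          have hint : 0 < (X ∩ W).card := by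
            have hun : (X ∪ W) ⊆ L := Finset.union_subset hXL hWL
            have h3 : (X ∪ W).card ≤ r*m :=
              le_trans (Finset.card_le_card hun) (le_of_eq hLcard)
            have h4 := Finset.card_union_add_card_inter X W
            have h5 : r*m < X.card + W.card := by
              have h6 : r*m ≤ r*A + r*A := by
                calc r*m ≤ r*(2*A) := Nat.mul_le_mul_left r hA2
                  _ = r*A + r*A := by ring
              omega
            omega
          obtain ⟨x, hx⟩ := Finset.card_pos.mp hint
          obtain ⟨hxX, hxW⟩ := Finset.mem_inter.mp hx
          obtain ⟨ℓ, hℓs, hℓx⟩ := Finset.mem_image.mp (hWdef ▸ hxW)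
          apply Finset.mem_biUnion.mpr ⟨ℓ, hℓs, ?_⟩
          refine Finset.mem_inter.mpr ⟨hc, ?_⟩
          rw [SimpleGraph.mem_neighborFinset]
          have hadj : G.Adj c x :=
            (SimpleGraph.mem_neighborFinset _ _ _).mp (Finset.mem_sdiff.mp (hXdef ▸ hxX)).1
          rw [hℓx]
          exact hadj.symm
      have hscard : s.card ≤ r*m := by
        calc s.card ≤ Fintype.card {x // x ∈ L} := Finset.card_le_univ s
          _ = L.card := Fintype.card_coe L
          _ = r*m := hLcard
      rw [hBC, hCm]
      exact le_trans hscard (le_of_eq (Nat.mul_comm r m))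
  obtain ⟨f, hfinj, hfmem⟩ := (Finset.all_card_le_biUnion_card_iff_exists_injective T).mp hall
  have hfC : ∀ ℓ, (f ℓ).1 ∈ C := fun ℓ =>
    (Finset.mem_inter.mp (Finset.mem_product.mp (hfmem ℓ)).1).1
  have hfAdj : ∀ ℓ, G.Adj ℓ.1 (f ℓ).1 := fun ℓ =>
    (SimpleGraph.mem_neighborFinset _ _ _).mp
      (Finset.mem_inter.mp (Finset.mem_product.mp (hfmem ℓ)).1).2
  set cmap : V → V := fun v => if h : v ∈ C then v else (f ⟨v, hmemL h⟩).1 with hcdef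
  have hcC : ∀ v, cmap v ∈ C := by
    intro v
    rw [hcdef]
    dsimp only
    split_ifs with h
    · exact h
    · exact hfC _
  have hfix : ∀ v : V, v ∈ C ↔ cmap v = v := by
    intro v
    constructor
    · intro h; rw [hcdef]; exact dif_pos h
    · intro h
      by_contra hvC
      have h2 := hcC v
      rw [h] at h2
      exact hvC h2
  refine ⟨cmap, ?_, ?_, ?_⟩
  · intro v; exact (hfix _).1 (hcC v)
  · intro v hne
    have hvC : v ∉ C := fun h => hne ((hfix v).1 h)
    have he : cmap v = (f ⟨v, hmemL hvC⟩).1 := by rw [hcdef]; exact dif_neg hvC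
    rw [he]
    exact (hfAdj ⟨v, hmemL hvC⟩).symm
  · intro v hv
    have hvC : v ∈ C := (hfix v).2 hv
    have hmap : ∀ u ∈ L, cmap u ∈ C := fun u _ => hcC u
    have hsum : L.card = ∑ w ∈ C, (L.filter (fun u => cmap u = w)).card :=
      Finset.card_eq_sum_card_fiberwise hmap
    have hle : ∀ w ∈ C, (L.filter (fun u => cmap u = w)).card ≤ r := by
      intro w hw
      have hstep : (L.filter (fun u => cmap u = w)).card ≤ (Finset.univ : Finset (Fin r)).card := by
        apply Finset.card_le_card_of_injOn
          (fun u => if h : u ∈ L then (f ⟨u, h⟩).2 else ⟨0, hr⟩)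
          (fun u _ => Finset.mem_univ _)
        intro u₁ h₁ u₂ h₂ heq
        simp only at heq
        simp only [Finset.coe_filter, Set.mem_setOf_eq] at h₁ h₂
        obtain ⟨h₁L, h₁c⟩ := h₁
        obtain ⟨h₂L, h₂c⟩ := h₂
        rw [dif_pos h₁L, dif_pos h₂L] at heq
        have h₁C : u₁ ∉ C := by rw [hLdef] at h₁L; exact Finset.mem_compl.mp h₁L
        have h₂C : u₂ ∉ C := by rw [hLdef] at h₂L; exact Finset.mem_compl.mp h₂L
        have e₁ : (f ⟨u₁, h₁L⟩).1 = w := by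
          have : cmap u₁ = (f ⟨u₁, hmemL h₁C⟩).1 := by rw [hcdef]; exact dif_neg h₁C
          rw [this] at h₁c
          convert h₁c using 3
        have e₂ : (f ⟨u₂, h₂L⟩).1 = w := by
          have : cmap u₂ = (f ⟨u₂, hmemL h₂C⟩).1 := by rw [hcdef]; exact dif_neg h₂C
          rw [this] at h₂c
          convert h₂c using 3
        have hfe : f ⟨u₁, h₁L⟩ = f ⟨u₂, h₂L⟩ := by
          apply Prod.ext
          · rw [e₁, e₂]
          · exact heq
        have := hfinj hfe
        exact congrArg Subtype.val this
      rwa [Finset.card_univ, Fintype.card_fin] at hstep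
    have heqr : ∀ w ∈ C, (L.filter (fun u => cmap u = w)).card = r := by
      by_contra hcon
      push_neg at hcon
      obtain ⟨w₀, hw₀, hne⟩ := hcon
      have hlt : ∑ w ∈ C, (L.filter (fun u => cmap u = w)).card < ∑ _w ∈ C, r :=
        Finset.sum_lt_sum (fun i hi => hle i hi)
          ⟨w₀, hw₀, lt_of_le_of_ne (hle _ hw₀) hne⟩
      rw [Finset.sum_const, hCm, smul_eq_mul] at hlt
      have hLrm : L.card = m*r := by rw [hLcard, Nat.mul_comm]
      omega
    have hfe : (Finset.univ.filter fun u : V => cmap u = v ∧ u ≠ v)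
        = L.filter (fun u => cmap u = v) := by
      ext u
      simp only [Finset.mem_filter, Finset.mem_univ, true_and, hLdef, Finset.mem_compl]
      constructor
      · rintro ⟨hcu, hne⟩
        refine ⟨fun huC => hne ?_, hcu⟩
        have h2 := (hfix u).1 huC
        rw [hcu] at h2
        exact h2.symm
      · rintro ⟨huC, hcu⟩
        exact ⟨hcu, fun h => huC (h ▸ hvC)⟩
    rw [hfe]
    exact heqr v hvC

/-- For every positive integer `r` and `ε > 0` there is `n₀` such that every graph `G` on
`n ≥ n₀` vertices with minimum degree at least `(1/2 + ε)n`, where `(r+1) ∣ n`, contains a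
`K_{1,r}`-factor.  The factor is encoded by a map `c` sending each vertex to the center of
its star: centers are fixed points, every non-center is adjacent to its center, and every
center has exactly `r` leaves. -/
theorem stmt_6 (r : ℕ) (hr : 1 ≤ r) (ε : ℝ) (hε : 0 < ε) :
    ∃ n₀ : ℕ, ∀ n : ℕ, n₀ ≤ n →
      ∀ (V : Type) [Fintype V] [DecidableEq V] (G : SimpleGraph V) [DecidableRel G.Adj],
        Fintype.card V = n → (1 / 2 + ε) * n ≤ (G.minDegree : ℝ) → (r + 1) ∣ n →
        ∃ c : V → V,
          (∀ v : V, c (c v) = c v) ∧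
          (∀ v : V, c v ≠ v → G.Adj (c v) v) ∧
          (∀ v : V, c v = v →
            (Finset.univ.filter fun u : V => c u = v ∧ u ≠ v).card = r) := by
  classical
  set K : ℕ := ⌈1/ε⌉₊ + 8 with hKdef
  have hK8 : 8 ≤ K := by omega
  refine ⟨(r+1)*(32768*(r+1)*K^4), ?_⟩
  intro n hn V _ _ G _ hcard hdeg hdvd
  obtain ⟨m, rfl⟩ := hdvd
  have hM : 32768*(r+1)*K^4 ≤ m := Nat.le_of_mul_le_mul_left hn (by omega)
  have hm1 : 1 ≤ m := by
    calc 1 ≤ K^4 := Nat.one_le_pow _ _ (by omega)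
    _ ≤ 32768*(r+1)*K^4 := Nat.le_mul_of_pos_left _ (by positivity)
    _ ≤ m := hM
  have hK0 : (0:ℝ) < K := by
    have : (8:ℝ) ≤ K := by exact_mod_cast hK8
    linarith
  have hεK : (1:ℝ)/K ≤ ε := by
    have h1 : (1/ε : ℝ) ≤ K := by
      calc (1/ε:ℝ) ≤ ⌈(1/ε:ℝ)⌉₊ := Nat.le_ceil _
        _ ≤ K := by
            have : (⌈(1/ε:ℝ)⌉₊ : ℕ) ≤ K := by omega
            exact_mod_cast this
    rw [div_le_iff₀ hK0]
    have h2 : (1/ε)*ε = 1 := one_div_mul_cancel hε.ne'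
    nlinarith [h2, mul_le_mul_of_nonneg_right h1 hε.le]
  have hdeg' : ∀ v : V, ((1:ℝ)/2 + 1/K) * (Fintype.card V) ≤ (G.degree v : ℝ) := by
    intro v
    have h1 : (G.minDegree : ℝ) ≤ G.degree v := by
      exact_mod_cast SimpleGraph.minDegree_le_degree G v
    have h2 : ((1:ℝ)/2 + 1/K) * (Fintype.card V) ≤ (1/2 + ε) * (Fintype.card V) := by
      apply mul_le_mul_of_nonneg_right (by linarith) (Nat.cast_nonneg _)
    have h3 : ((1:ℝ)/2 + ε) * (Fintype.card V) ≤ G.minDegree := by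
      rw [hcard]
      exact hdeg
    linarith
  obtain ⟨C, hCm, hgood⟩ := exists_good V G r m K hr hK8 hcard hM hdeg'
  set A : ℕ := ⌈((1:ℝ)/2 + 1/(4*(K:ℝ))) * m⌉₊ with hAdef
  have hm1R : (1:ℝ) ≤ m := by exact_mod_cast hm1
  have hA1 : 1 ≤ A := by
    apply Nat.ceil_pos.mpr
    have : (0:ℝ) < (1:ℝ)/2 + 1/(4*(K:ℝ)) := by positivity
    nlinarith
  have hA2 : m ≤ 2*A := by
    have h1 : ((1:ℝ)/2 + 1/(4*(K:ℝ))) * m ≤ A := Nat.le_ceil _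
    have h2 : (m:ℝ) ≤ 2*A := by
      have h3 : (0:ℝ) < 1/(4*(K:ℝ)) := by positivity
      nlinarith
    exact_mod_cast h2
  exact hall_part V G r m A hr hcard C hCm hA1 hA2 hgood
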